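/- Let M > 0 and let E, F ≥ 0 be real numbers with |2F − E| ≤ 1 and E > 1. Then for every continuously differentiable f : [2M, ∞) → ℝ satisfying ∫_{2M}^{∞} ( s² f′(s)² + f(s)² ) ds < ∞, one has ∫_{2M}^{∞} [ s(s − 2M) f′(s)² + ( (E² − 1)/4 − 2MF²/s ) f(s)² ] ds ≥ 0. -/

import Mathlib

open MeasureTheory Set Filter Topology

set_option maxHeartbeats 2000000 in
/-- **The Hardy inequality on the half-line `[2M, ∞)`.**
For `M > 0` and `E, F ≥ 0` with `|2F - E| ≤ 1` and `E > 1`, every `C¹` function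
`f` on `[2M, ∞)` with `∫ (s² f'² + f²) < ∞` satisfies
`∫_{2M}^∞ [ s(s-2M) f'² + ((E²-1)/4 - 2MF²/s) f² ] ds ≥ 0`. -/
theorem hardy_inequality_halfline
    (M E F : ℝ) (hM : 0 < M)
    (hE0 : 0 ≤ E) (hF0 : 0 ≤ F)
    (hEF : |2*F - E| ≤ 1) (hE1 : 1 < E)
    (f : ℝ → ℝ) (hf : ContDiffOn ℝ 1 f (Ici (2*M)))
    (hfin : IntegrableOn (fun s => s^2 * (deriv f s)^2 + (f s)^2) (Ici (2*M))) :
    0 ≤ ∫ s in Ici (2*M),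
      (s*(s - 2*M) * (deriv f s)^2 + ((E^2 - 1)/4 - 2*M*F^2/s) * (f s)^2) := by
  set r : ℝ := 2*M with hrdef
  have hr0 : 0 < r := by positivity
  set a : ℝ := (1+E)/2 with hadef
  have ha0 : 0 < a := by rw [hadef]; linarith
  have hFa : F ≤ a := by
    have h := abs_le.1 hEF
    rw [hadef]; linarith [h.2]
  have haF : 0 ≤ a^2 - F^2 := by nlinarith
  -- continuity and differentiability facts
  have hfc : ContinuousOn f (Ici r) := hf.continuousOn
  have hfd : ∀ s ∈ Ioi r, HasDerivAt f (deriv f s) s := by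
    intro s hs
    exact ((hf.differentiableOn (by norm_num) s (mem_Ici.2 (le_of_lt hs))).differentiableAt
      (Ici_mem_nhds hs)).hasDerivAt
  have hderivc : ContinuousOn (deriv f) (Ioi r) := by
    have h1 : ContinuousOn (derivWithin f (Ici r)) (Ici r) :=
      hf.continuousOn_derivWithin (uniqueDiffOn_Ici r) le_rfl
    refine (h1.mono Ioi_subset_Ici_self).congr ?_
    intro s hs
    exact (derivWithin_of_mem_nhds (Ici_mem_nhds hs)).symm
  -- the dominating function
  set D : ℝ → ℝ := fun s => s^2 * (deriv f s)^2 + (f s)^2 with hDdef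
  have hDIoi : IntegrableOn D (Ioi r) := hfin.mono_set Ioi_subset_Ici_self
  have hmf : AEStronglyMeasurable f (volume.restrict (Ioi r)) :=
    (hfc.mono Ioi_subset_Ici_self).aestronglyMeasurable measurableSet_Ioi
  have hmd : AEStronglyMeasurable (deriv f) (volume.restrict (Ioi r)) :=
    hderivc.aestronglyMeasurable measurableSet_Ioi
  -- integrability of f^2
  have hf2 : IntegrableOn (fun s => (f s)^2) (Ioi r) := by
    refine hDIoi.mono' (hmf.pow 2) ?_
    filter_upwards with s
    rw [Real.norm_eq_abs, abs_of_nonneg (sq_nonneg _)]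
    show f s ^ 2 ≤ s ^ 2 * deriv f s ^ 2 + f s ^ 2
    nlinarith [sq_nonneg (s * deriv f s)]
  -- the multiplier function g and its derivative gd
  set g : ℝ → ℝ := fun s => a * (s - r) * (f s)^2 with hgdef
  set gd : ℝ → ℝ := fun s => a * (f s)^2 + a * (s - r) * (2 * f s * deriv f s) with hgddef
  have hgderiv : ∀ s ∈ Ioi r, HasDerivAt g (gd s) s := by
    intro s hs
    have h1 : HasDerivAt (fun t : ℝ => a * (t - r)) (a * 1) s :=
      ((hasDerivAt_id s).sub_const r).const_mul a
    have h2 : HasDerivAt (fun t => (f t)^2) (2 * f s * deriv f s) s := by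
      have h := (hfd s hs).fun_pow 2
      refine h.congr_deriv ?_
      push_cast
      ring
    have h3 := h1.mul h2
    rw [hgdef, hgddef]
    exact h3.congr_deriv (by beta_reduce; ring)
  -- integrability of gd
  have hgdint : IntegrableOn gd (Ioi r) := by
    refine (hDIoi.const_mul (2*a)).mono' ?_ ?_
    · exact ((hmf.pow 2).const_mul a).add
        (((aestronglyMeasurable_id.sub aestronglyMeasurable_const).const_mul a).mul
          ((hmf.const_mul 2).mul hmd))
    · filter_upwards [ae_restrict_mem measurableSet_Ioi] with s hs
      have hsr : r < s := hs
      rw [Real.norm_eq_abs]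
      show |a * f s ^ 2 + a * (s - r) * (2 * f s * deriv f s)|
        ≤ 2 * a * (s ^ 2 * deriv f s ^ 2 + f s ^ 2)
      rw [abs_le]
      constructor
      · nlinarith [mul_nonneg ha0.le (sq_nonneg ((s - r) * deriv f s + f s)),
          mul_nonneg ha0.le (mul_nonneg (mul_nonneg hr0.le
            (by linarith : (0:ℝ) ≤ 2*s - r)) (sq_nonneg (deriv f s))),
          mul_nonneg ha0.le (sq_nonneg (s * deriv f s)),
          mul_nonneg ha0.le (sq_nonneg (f s))]
      · nlinarith [mul_nonneg ha0.le (sq_nonneg ((s - r) * deriv f s - f s)),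
          mul_nonneg ha0.le (mul_nonneg (mul_nonneg hr0.le
            (by linarith : (0:ℝ) ≤ 2*s - r)) (sq_nonneg (deriv f s))),
          mul_nonneg ha0.le (sq_nonneg (s * deriv f s)),
          mul_nonneg ha0.le (sq_nonneg (f s))]
  -- integrability of the integrand
  set I : ℝ → ℝ := fun s => s*(s - r) * (deriv f s)^2 + ((E^2 - 1)/4 - r*F^2/s) * (f s)^2
    with hIdef
  have hIint : IntegrableOn I (Ioi r) := by
    refine (hDIoi.const_mul ((E^2-1)/4 + F^2 + 1)).mono' ?_ ?_
    · refine AEStronglyMeasurable.add ?_ ?_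
      · exact ((aestronglyMeasurable_id.mul
          (aestronglyMeasurable_id.sub aestronglyMeasurable_const)).mul (hmd.pow 2))
      · refine AEStronglyMeasurable.mul ?_ (hmf.pow 2)
        refine AEStronglyMeasurable.sub aestronglyMeasurable_const ?_
        exact ((continuousOn_const.div continuousOn_id
          (fun x hx => ne_of_gt (lt_trans hr0 hx))).aestronglyMeasurable measurableSet_Ioi)
    · filter_upwards [ae_restrict_mem measurableSet_Ioi] with s hs
      have hsr : r < s := hs
      have hs0 : 0 < s := lt_trans hr0 hsr
      rw [Real.norm_eq_abs]
      show |s * (s - r) * deriv f s ^ 2 + ((E ^ 2 - 1) / 4 - r * F ^ 2 / s) * f s ^ 2|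
        ≤ ((E ^ 2 - 1) / 4 + F ^ 2 + 1) * (s ^ 2 * deriv f s ^ 2 + f s ^ 2)
      obtain ⟨q, hq⟩ : ∃ q, r*F^2/s = q := ⟨_, rfl⟩
      have hq1 : 0 ≤ q := hq ▸ by positivity
      have hq2 : q ≤ F^2 := by
        rw [← hq, div_le_iff₀ hs0]; nlinarith [sq_nonneg F]
      rw [hq, abs_le]
      have hE2 : 0 ≤ (E^2-1)/4 := by nlinarith
      have t1 : 0 ≤ r*s*(deriv f s)^2 :=
        mul_nonneg (mul_nonneg hr0.le hs0.le) (sq_nonneg _)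
      have t2 : 0 ≤ ((E^2-1)/4 + F^2) * (s^2*(deriv f s)^2) :=
        mul_nonneg (by linarith [sq_nonneg F]) (by positivity)
      have t3 : 0 ≤ q * (f s)^2 := mul_nonneg hq1 (sq_nonneg _)
      have t4 : 0 ≤ (F^2 + 1 - q) * (f s)^2 :=
        mul_nonneg (by nlinarith [sq_nonneg F]) (sq_nonneg _)
      have t5 : 0 ≤ ((E^2-1)/4 + F^2 + 1 + ((E^2-1)/4 - q)) * (s^2*(deriv f s)^2)
          + (2*(E^2-1)/4 + F^2 + 1 - q) * (f s)^2 := by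
        refine add_nonneg (mul_nonneg ?_ (by positivity)) (mul_nonneg ?_ (sq_nonneg _)) <;>
          nlinarith [sq_nonneg F]
      have t0 : 0 ≤ s*(s-r)*(deriv f s)^2 :=
        mul_nonneg (mul_nonneg hs0.le (by linarith)) (sq_nonneg _)
      have t6 : 0 ≤ ((E^2-1)/4 - q + ((E^2-1)/4 + F^2 + 1)) * (f s)^2 :=
        mul_nonneg (by nlinarith [sq_nonneg F]) (sq_nonneg _)
      have t7 : 0 ≤ ((E^2-1)/4 + F^2 + 1) * (s^2*(deriv f s)^2) :=
        mul_nonneg (by nlinarith [sq_nonneg F]) (by positivity)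
      have t8 : 0 ≤ (((E^2-1)/4 + F^2)*s^2 + r*s) * (deriv f s)^2 :=
        mul_nonneg (by nlinarith [sq_nonneg F, mul_pos hr0 hs0, sq_nonneg s]) (sq_nonneg _)
      have t9 : 0 ≤ (F^2 + 1 + q) * (f s)^2 :=
        mul_nonneg (by nlinarith [sq_nonneg F]) (sq_nonneg _)
      constructor
      · nlinarith [t0, t6, t7]
      · nlinarith [t8, t9]
  -- the pointwise inequality
  have key : ∀ x ∈ Ioi r, 0 ≤ I x + gd x := by
    intro x hx
    have hxr : r < x := hx
    have hx0 : 0 < x := lt_trans hr0 hxr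
    have hxr' : (0:ℝ) < x - r := by linarith
    have hkey : (x * (x - r)) * (I x + gd x)
        = (x*(x-r)*(deriv f x) + a*(x-r)*(f x))^2 + r*(a^2 - F^2)*(x-r)*(f x)^2 := by
      show (x * (x - r)) * ((x*(x - r) * (deriv f x)^2
          + ((E^2 - 1)/4 - r*F^2/x) * (f x)^2)
          + (a * (f x)^2 + a * (x - r) * (2 * f x * deriv f x))) = _
      rw [hadef]
      field_simp
      ring
    have hrhs : 0 ≤ (x * (x - r)) * (I x + gd x) := by
      rw [hkey]
      have h2 : 0 ≤ r*(a^2 - F^2)*(x-r)*(f x)^2 :=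
        mul_nonneg (mul_nonneg (mul_nonneg hr0.le haF) hxr'.le) (sq_nonneg _)
      nlinarith [sq_nonneg (x*(x-r)*(deriv f x) + a*(x-r)*(f x))]
    nlinarith [hrhs, mul_pos hx0 hxr']
  -- the FTC part : ∫ gd = 0
  have hcontg : ContinuousWithinAt g (Ici r) r := by
    have hg : ContinuousOn g (Ici r) :=
      (continuousOn_const.mul ((continuous_id.sub continuous_const).continuousOn)).mul
        (hfc.pow 2)
    exact hg r self_mem_Ici
  have htends : Tendsto g atTop (𝓝 (limUnder atTop g)) :=
    tendsto_limUnder_of_hasDerivAt_of_integrableOn_Ioi hgderiv hgdint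
  set L : ℝ := limUnder atTop g with hLdef
  have hL0 : 0 ≤ L := by
    refine ge_of_tendsto htends ?_
    filter_upwards [Ici_mem_atTop r] with x hx
    have hx' : 0 ≤ x - r := by linarith [mem_Ici.1 hx]
    rw [hgdef]
    positivity
  have hLle : L ≤ 0 := by
    by_contra hpos
    push_neg at hpos
    have hev : ∀ᶠ x in atTop, L/2 < g x :=
      htends.eventually (eventually_gt_nhds (by linarith))
    obtain ⟨R, hR⟩ := Filter.eventually_atTop.1 (hev.and (eventually_ge_atTop (r+1)))
    set S : ℝ := max R (r+1) with hSdef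
    have hSr : r < S := lt_of_lt_of_le (by linarith) (le_max_right _ _)
    have hbound : ∀ x ∈ Ioi S, x⁻¹ ≤ 2*a/L * (f x)^2 := by
      intro x hx
      have hx1 : R ≤ x := le_trans (le_max_left _ _) (le_of_lt hx)
      obtain ⟨hg2, hxr1⟩ := hR x hx1
      have hx0 : 0 < x := by linarith
      have h3 : L/2 < a * x * (f x)^2 := by
        rw [hgdef] at hg2
        nlinarith [sq_nonneg (f x), mul_nonneg ha0.le (sq_nonneg (f x))]
      rw [show x⁻¹ = 1/x from (one_div x).symm, div_le_iff₀ hx0]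
      rw [show 2*a/L*(f x)^2*x = (2*a*(f x)^2*x)/L by ring, le_div_iff₀ hpos]
      nlinarith
    have hint : IntegrableOn (fun x : ℝ => x⁻¹) (Ioi S) := by
      refine ((hf2.mono_set (Ioi_subset_Ioi (by linarith : r ≤ S))).const_mul
        (2*a/L)).mono' ?_ ?_
      · exact ((continuousOn_inv₀.mono
          (fun x hx => ne_of_gt (lt_trans (lt_of_lt_of_le hr0 (by linarith)) hx))).aestronglyMeasurable
          measurableSet_Ioi)
      · filter_upwards [ae_restrict_mem measurableSet_Ioi] with x hx
        have hx0 : 0 < x := lt_trans (lt_trans hr0 hSr) hx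
        rw [Real.norm_eq_abs, abs_of_nonneg (inv_nonneg.2 hx0.le)]
        exact hbound x hx
    exact not_IntegrableOn_Ioi_inv hint
  have hLzero : L = 0 := le_antisymm hLle hL0
  have hgd0 : ∫ x in Ioi r, gd x = 0 := by
    have h := integral_Ioi_of_hasDerivAt_of_tendsto hcontg hgderiv hgdint htends
    have hgr : g r = 0 := by rw [hgdef]; simp
    rw [h, hgr, hLzero, sub_zero]
  -- assemble
  rw [integral_Ici_eq_integral_Ioi]
  have hsum : 0 ≤ ∫ x in Ioi r, (I x + gd x) :=
    setIntegral_nonneg measurableSet_Ioi key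
  rw [integral_add hIint hgdint, hgd0, add_zero] at hsum
  exact hsum
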